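/- Let X be a perfectly normal Hausdorff topological space and let C be the set of all continuous functions X → ℝ. Then C is a constructible ℓ-group, i.e., C satisfies (C1), (C2), (C3) and (C4). -/

import Mathlib

open Set

variable {X : Type*} [TopologicalSpace X]

/-- A `C`-zero set: the zero set of a member of `C`. -/
def IsZeroSetOf (C : Set (X → ℝ)) (Z : Set X) : Prop := ∃ f ∈ C, Z = {x | f x = 0}

/-- A `C`-cozero set: the complement of a `C`-zero set. -/
def IsCozeroSetOf (C : Set (X → ℝ)) (U : Set X) : Prop := ∃ f ∈ C, U = {x | f x ≠ 0}

/-- A `C`-constructible set: a finite Boolean combination of `C`-zero sets. -/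
inductive IsConstructibleIn (C : Set (X → ℝ)) : Set X → Prop
  | zeroSet {Z : Set X} : IsZeroSetOf C Z → IsConstructibleIn C Z
  | compl {Z : Set X} : IsConstructibleIn C Z → IsConstructibleIn C Zᶜ
  | union {Z W : Set X} : IsConstructibleIn C Z → IsConstructibleIn C W →
      IsConstructibleIn C (Z ∪ W)

/-- A `C`-constructible function on `Z`: `Z` is covered by finitely many
`C`-constructible sets `Zs i` on each of which `g` agrees with a member of `C`. -/
def IsConstructibleFunOn (C : Set (X → ℝ)) (Z : Set X) (g : X → ℝ) : Prop :=
  ∃ (n : ℕ) (Zs : Fin n → Set X) (fs : Fin n → X → ℝ),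
    (∀ i, IsConstructibleIn C (Zs i)) ∧ (⋃ i, Zs i) = Z ∧
    (∀ i, fs i ∈ C) ∧ (∀ i, ∀ x ∈ Zs i, g x = fs i x)

/-- (C1) Every closed `C`-constructible set is a `C`-zero set. -/
def CondC1 (C : Set (X → ℝ)) : Prop :=
  ∀ Z : Set X, IsClosed Z → IsConstructibleIn C Z → IsZeroSetOf C Z

/-- (C2) The closure of every `C`-cozero set is `C`-constructible. -/
def CondC2 (C : Set (X → ℝ)) : Prop :=
  ∀ U : Set X, IsCozeroSetOf C U → IsConstructibleIn C (closure U)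

/-- (C3) Every continuous `C`-constructible function on a closed
`C`-constructible set extends to a member of `C`. -/
def CondC3 (C : Set (X → ℝ)) : Prop :=
  ∀ A : Set X, IsClosed A → IsConstructibleIn C A →
    ∀ g : X → ℝ, ContinuousOn g A → IsConstructibleFunOn C A g →
      ∃ f ∈ C, ∀ x ∈ A, f x = g x

/-- (C4) Glueing over finite closed `C`-constructible covers of `X`. -/
def CondC4 (C : Set (X → ℝ)) : Prop :=
  ∀ (n : ℕ) (A : Fin n → Set X), (∀ i, IsClosed (A i)) →
    (∀ i, IsConstructibleIn C (A i)) → (⋃ i, A i) = univ →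
    ∀ f : X → ℝ, (∀ i, ContinuousOn f (A i) ∧ IsConstructibleFunOn C (A i) f) →
      f ∈ C

lemma closed_zeroset {X : Type*} [TopologicalSpace X] [PerfectlyNormalSpace X]
    {s : Set X} (hs : IsClosed s) : ∃ f : X → ℝ, Continuous f ∧ s = {x | f x = 0} := by
  obtain ⟨U, hUopen, hUs⟩ := isGδ_iff_eq_iInter_nat.1 (PerfectlyNormalSpace.closed_gdelta hs)
  have hsub : ∀ n, s ⊆ U n := fun n => hUs ▸ iInter_subset U n
  have hg : ∀ n : ℕ, ∃ g : C(X, ℝ), EqOn g 0 s ∧ EqOn g 1 (U n)ᶜ ∧ ∀ x, g x ∈ Icc (0:ℝ) 1 := by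
    intro n
    exact exists_continuous_zero_one_of_isClosed hs (hUopen n).isClosed_compl
      (disjoint_compl_right_iff_subset.2 (hsub n))
  choose g hg0 hg1 hg01 using hg
  refine ⟨fun x => ∑' n, (1/2:ℝ)^n * g n x, ?_, ?_⟩
  · refine continuous_tsum (fun n => (continuous_const.mul (g n).continuous))
      summable_geometric_two (fun n x => ?_)
    rw [norm_mul]
    have h1 : |g n x| ≤ 1 := abs_le.2 ⟨le_trans (by norm_num) (hg01 n x).1, (hg01 n x).2⟩
    calc ‖(1/2:ℝ)^n‖ * ‖g n x‖ ≤ ‖(1/2:ℝ)^n‖ * 1 := by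
          exact mul_le_mul_of_nonneg_left h1 (norm_nonneg _)
      _ = (1/2:ℝ)^n := by rw [mul_one, Real.norm_eq_abs, abs_pow, abs_of_nonneg]; norm_num
  · ext x
    simp only [mem_setOf_eq]
    constructor
    · intro hx
      have : ∀ n : ℕ, (1/2:ℝ)^n * g n x = 0 := by
        intro n; rw [hg0 n hx]; simp
      rw [tsum_congr this]; exact tsum_zero
    · intro hx
      by_contra hxs
      have hxU : ∃ n, x ∉ U n := by
        by_contra h
        push_neg at h
        exact hxs (hUs ▸ mem_iInter.2 h)
      obtain ⟨n, hn⟩ := hxU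
      have hnonneg : ∀ m : ℕ, 0 ≤ (1/2:ℝ)^m * g m x :=
        fun m => mul_nonneg (by positivity) (hg01 m x).1
      have hsumm : Summable (fun m : ℕ => (1/2:ℝ)^m * g m x) := by
        refine Summable.of_nonneg_of_le hnonneg (fun m => ?_) summable_geometric_two
        calc (1/2:ℝ)^m * g m x ≤ (1/2:ℝ)^m * 1 :=
              mul_le_mul_of_nonneg_left (hg01 m x).2 (by positivity)
          _ = (1/2:ℝ)^m := mul_one _
      have hpos : 0 < (1/2:ℝ)^n * g n x := by
        rw [hg1 n hn]; simp only [Pi.one_apply, mul_one]; positivity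
      exact absurd hx (ne_of_gt (Summable.tsum_pos hsumm hnonneg n hpos))

/-- If `X` is a perfectly normal Hausdorff space, then the set `C`
of all continuous functions `X → ℝ` is a constructible ℓ-group, i.e. satisfies
(C1), (C2), (C3) and (C4). -/
theorem stmt_8 (X : Type*) [TopologicalSpace X] [T2Space X] [PerfectlyNormalSpace X] :
    CondC1 {f : X → ℝ | Continuous f} ∧ CondC2 {f : X → ℝ | Continuous f} ∧
    CondC3 {f : X → ℝ | Continuous f} ∧ CondC4 {f : X → ℝ | Continuous f} := by
  refine ⟨?_, ?_, ?_, ?_⟩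
  · intro Z hZ _
    obtain ⟨f, hf, hfz⟩ := closed_zeroset hZ
    exact ⟨f, hf, hfz⟩
  · intro U _
    obtain ⟨f, hf, hfz⟩ := closed_zeroset (isClosed_closure (s := U))
    exact IsConstructibleIn.zeroSet ⟨f, hf, hfz⟩
  · intro A hA _ g hg _
    obtain ⟨f, hf⟩ := ContinuousMap.exists_restrict_eq (Y := ℝ) hA
      ⟨A.restrict g, hg.restrict⟩
    refine ⟨f, f.continuous, fun x hx => ?_⟩
    have := congrFun (congrArg DFunLike.coe hf) ⟨x, hx⟩
    exact this
  · intro n A hcl hcon hcov f hf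
    exact (locallyFinite_of_finite A).continuous hcov hcl (fun i => (hf i).1)
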